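/- Suppose T is a continuous linear operator on a separable Fréchet space X admitting a dense subset X₀ ⊆ X, a map S : X₀ → X₀ with T(S x) = x for all x ∈ X₀, and a strictly increasing sequence (m_k) of natural numbers which contains, for every m, an arithmetic progression of length m whose initial term equals its common difference (i.e., a set {q, 2q, ..., mq} for some q), such that T^{m_k} x → 0 and S^{m_k} x → 0 for every x ∈ X₀. Then T is AP-hypercyclic. -/

import Mathlib

open Filter Topology

def ContainsAPs (A : Set ℕ) : Prop :=
  ∀ m : ℕ, ∃ a k : ℕ, 1 ≤ a ∧ 1 ≤ k ∧ ∀ j ≤ m, a + j * k ∈ A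

theorem AP_hypercyclicity_criterion
    {X : Type*} [AddCommGroup X] [Module ℝ X] [UniformSpace X] [IsUniformAddGroup X]
    [ContinuousSMul ℝ X] [LocallyConvexSpace ℝ X] [CompleteSpace X]
    [TopologicalSpace.MetrizableSpace X] [TopologicalSpace.SeparableSpace X]
    (T : X →L[ℝ] X) (X₀ : Set X) (hX₀ : Dense X₀)
    (S : X → X) (hSmaps : ∀ x ∈ X₀, S x ∈ X₀)
    (hTS : ∀ x ∈ X₀, T (S x) = x)
    (mk : ℕ → ℕ) (hmono : StrictMono mk)
    (hAP : ∀ m : ℕ, ∃ q : ℕ, 1 ≤ q ∧ ∀ j : ℕ, 1 ≤ j → j ≤ m → j * q ∈ Set.range mk)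
    (hT0 : ∀ x ∈ X₀, Tendsto (fun k : ℕ => (T ^ mk k) x) atTop (𝓝 0))
    (hS0 : ∀ x ∈ X₀, Tendsto (fun k : ℕ => S^[mk k] x) atTop (𝓝 0)) :
    ∃ x : X, ∀ U : Set X, IsOpen U → U.Nonempty →
        ContainsAPs {n : ℕ | (T ^ n) x ∈ U} := by
  -- Set up instances : Baire space, second countable
  haveI : (uniformity X).IsCountablyGenerated := IsUniformAddGroup.uniformity_countably_generated
  haveI : SecondCountableTopology X :=
    UniformSpace.secondCountable_of_separable X
  -- S iterates stay in X₀
  have hSit : ∀ p : ℕ, ∀ u ∈ X₀, S^[p] u ∈ X₀ := by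
    intro p
    induction p with
    | zero => intro u hu; simpa using hu
    | succ p ih =>
      intro u hu
      rw [Function.iterate_succ_apply']
      exact hSmaps _ (ih u hu)
  -- T^n ∘ S^[n] = id on X₀
  have hTSn : ∀ n : ℕ, ∀ u ∈ X₀, (T ^ n) (S^[n] u) = u := by
    intro n
    induction n with
    | zero => intro u hu; simp
    | succ n ih =>
      intro u hu
      rw [Function.iterate_succ_apply', pow_succ, ContinuousLinearMap.mul_apply,
        hTS _ (hSit n u hu)]
      exact ih u hu
  have hTSle : ∀ a b : ℕ, ∀ u ∈ X₀, (T ^ a) (S^[a + b] u) = S^[b] u := by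
    intro a b u hu
    rw [Function.iterate_add_apply]
    exact hTSn a _ (hSit b u hu)
  -- key convergence lemma along times in the range of mk tending to infinity
  have key : ∀ u ∈ X₀, ∀ b : ℕ → ℕ, (∀ n, b n ∈ Set.range mk) → Tendsto b atTop atTop →
      Tendsto (fun n => (T ^ b n) u) atTop (𝓝 0) ∧
      Tendsto (fun n => S^[b n] u) atTop (𝓝 0) := by
    intro u hu b hbr hb
    choose κ hκ using hbr
    have hκt : Tendsto κ atTop atTop := by
      refine tendsto_atTop.2 fun C => ?_
      filter_upwards [hb.eventually_ge_atTop (mk C + 1)] with n hn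
      have h1 : mk C < mk (κ n) := by rw [hκ]; omega
      exact (hmono.lt_iff_lt.1 h1).le
    constructor
    · have h := (hT0 u hu).comp hκt
      have he : (fun n => (T ^ b n) u) = (fun k => (T ^ mk k) u) ∘ κ := by
        funext n; simp [Function.comp, hκ]
      rw [he]; exact h
    · have h := (hS0 u hu).comp hκt
      have he : (fun n => S^[b n] u) = (fun k => S^[mk k] u) ∘ κ := by
        funext n; simp [Function.comp, hκ]
      rw [he]; exact h
  -- arbitrarily large common differences
  have hQ : ∀ M : ℕ, ∃ Q : ℕ → ℕ, ∀ n,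
      (n ≤ Q n ∧ 1 ≤ Q n) ∧ ∀ j, 1 ≤ j → j ≤ M → j * Q n ∈ Set.range mk := by
    intro M
    have h : ∀ n : ℕ, ∃ q : ℕ,
        (n ≤ q ∧ 1 ≤ q) ∧ ∀ j, 1 ≤ j → j ≤ M → j * q ∈ Set.range mk := by
      intro n
      obtain ⟨q', hq'1, hq'⟩ := hAP (M * (n + 1))
      refine ⟨(n + 1) * q', ⟨?_, ?_⟩, fun j hj1 hjM => ?_⟩
      · calc n ≤ (n + 1) * 1 := by omega
          _ ≤ (n + 1) * q' := by exact Nat.mul_le_mul_left _ hq'1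
      · calc 1 ≤ 1 * 1 := le_refl _
          _ ≤ (n + 1) * q' := Nat.mul_le_mul (by omega) hq'1
      · have h1 : 1 ≤ j * (n + 1) := by calc 1 ≤ j * 1 := by omega
          _ ≤ j * (n + 1) := Nat.mul_le_mul_left _ (by omega)
        have h2 : j * (n + 1) ≤ M * (n + 1) := Nat.mul_le_mul_right _ hjM
        have := hq' (j * (n + 1)) h1 h2
        rwa [mul_assoc] at this
    choose Q hQ using h
    exact ⟨Q, hQ⟩
  -- the basic open-dense sets
  have hFopen : ∀ V : Set X, IsOpen V → ∀ M : ℕ,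
      IsOpen {x : X | ∃ q, 1 ≤ q ∧ ∀ j, 1 ≤ j → j ≤ M → (T ^ (j * q)) x ∈ V} := by
    intro V hV M
    have he : {x : X | ∃ q, 1 ≤ q ∧ ∀ j, 1 ≤ j → j ≤ M → (T ^ (j * q)) x ∈ V}
        = ⋃ q : ℕ, ⋃ _ : 1 ≤ q, ⋂ j ∈ Finset.Icc 1 M, (T ^ (j * q)) ⁻¹' V := by
      ext x
      simp only [Set.mem_setOf_eq, Set.mem_iUnion, Set.mem_iInter, Set.mem_preimage,
        Finset.mem_Icc]
      constructor
      · rintro ⟨q, hq1, hq⟩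
        exact ⟨q, hq1, fun j hj => hq j hj.1 hj.2⟩
      · rintro ⟨q, hq1, hq⟩
        exact ⟨q, hq1, fun j hj1 hjM => hq j ⟨hj1, hjM⟩⟩
    rw [he]
    refine isOpen_iUnion fun q => isOpen_iUnion fun _ => isOpen_biInter_finset fun j _ => ?_
    exact hV.preimage (T ^ (j * q)).continuous
  have hFdense : ∀ V : Set X, IsOpen V → V.Nonempty → ∀ M : ℕ,
      Dense {x : X | ∃ q, 1 ≤ q ∧ ∀ j, 1 ≤ j → j ≤ M → (T ^ (j * q)) x ∈ V} := by
    intro V hV hVne M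
    rw [dense_iff_inter_open]
    intro W hW hWne
    obtain ⟨w, hwW, hwX₀⟩ := hX₀.inter_open_nonempty W hW hWne
    obtain ⟨u, huV, huX₀⟩ := hX₀.inter_open_nonempty V hV hVne
    obtain ⟨Q, hQm⟩ := hQ M
    set x : ℕ → X := fun n => w + ∑ i ∈ Finset.Icc 1 M, S^[i * Q n] u with hxdef
    -- auxiliary facts about the times
    have hbr : ∀ j, 1 ≤ j → j ≤ M → ∀ n, j * Q n ∈ Set.range mk := fun j hj1 hjM n =>
      (hQm n).2 j hj1 hjM
    have hbt : ∀ j, 1 ≤ j → Tendsto (fun n => j * Q n) atTop atTop := by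
      intro j hj1
      refine tendsto_atTop_mono (fun n => ?_) tendsto_id
      calc (n : ℕ) ≤ Q n := (hQm n).1.1
        _ = 1 * Q n := (one_mul _).symm
        _ ≤ j * Q n := Nat.mul_le_mul_right _ hj1
    -- x n → w
    have hxw : Tendsto x atTop (𝓝 w) := by
      have hsum : Tendsto (fun n => ∑ i ∈ Finset.Icc 1 M, S^[i * Q n] u) atTop (𝓝 0) := by
        have h := tendsto_finset_sum (Finset.Icc 1 M)
          (fun i hi => (key u huX₀ (fun n => i * Q n)
            (hbr i (Finset.mem_Icc.1 hi).1 (Finset.mem_Icc.1 hi).2)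
            (hbt i (Finset.mem_Icc.1 hi).1)).2)
        simpa using h
      have hadd := Tendsto.add (tendsto_const_nhds : Tendsto (fun _ : ℕ => w) atTop (𝓝 w)) hsum
      rw [hxdef]
      simpa using hadd
    -- T^(j * Q n) (x n) → u for each relevant j
    have hTx : ∀ j, 1 ≤ j → j ≤ M →
        Tendsto (fun n => (T ^ (j * Q n)) (x n)) atTop (𝓝 u) := by
      intro j hj1 hjM
      have hexp : ∀ n, (T ^ (j * Q n)) (x n)
          = (T ^ (j * Q n)) w + ∑ i ∈ Finset.Icc 1 M, (T ^ (j * Q n)) (S^[i * Q n] u) := by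
        intro n
        simp only [hxdef, map_add, map_sum]
      have hterm : ∀ i ∈ Finset.Icc 1 M,
          Tendsto (fun n => (T ^ (j * Q n)) (S^[i * Q n] u)) atTop
            (𝓝 (if i = j then u else 0)) := by
        intro i hi
        obtain ⟨hi1, hiM⟩ := Finset.mem_Icc.1 hi
        rcases lt_trichotomy i j with hij | rfl | hij
        · -- i < j
          have heq : ∀ n, (T ^ (j * Q n)) (S^[i * Q n] u) = (T ^ ((j - i) * Q n)) u := by
            intro n
            have h1 : j * Q n = (j - i) * Q n + i * Q n := by
              rw [← add_mul]
              congr 1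
              omega
            rw [h1, pow_add, ContinuousLinearMap.mul_apply, hTSn (i * Q n) u huX₀]
          rw [if_neg (by omega)]
          rw [show (fun n => (T ^ (j * Q n)) (S^[i * Q n] u))
              = fun n => (T ^ ((j - i) * Q n)) u from funext heq]
          exact (key u huX₀ (fun n => (j - i) * Q n)
            (hbr (j - i) (by omega) (by omega)) (hbt (j - i) (by omega))).1
        · -- i = j
          have heq : ∀ n, (T ^ (i * Q n)) (S^[i * Q n] u) = u := fun n =>
            hTSn (i * Q n) u huX₀
          rw [if_pos rfl]
          rw [show (fun n => (T ^ (i * Q n)) (S^[i * Q n] u)) = fun _ => u from funext heq]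
          exact tendsto_const_nhds
        · -- j < i
          have heq : ∀ n, (T ^ (j * Q n)) (S^[i * Q n] u) = S^[(i - j) * Q n] u := by
            intro n
            have h1 : i * Q n = j * Q n + (i - j) * Q n := by
              rw [← add_mul]
              congr 1
              omega
            rw [h1, hTSle (j * Q n) ((i - j) * Q n) u huX₀]
          rw [if_neg (by omega)]
          rw [show (fun n => (T ^ (j * Q n)) (S^[i * Q n] u))
              = fun n => S^[(i - j) * Q n] u from funext heq]
          exact (key u huX₀ (fun n => (i - j) * Q n)
            (hbr (i - j) (by omega) (by omega)) (hbt (i - j) (by omega))).2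
      have hsum := tendsto_finset_sum (Finset.Icc 1 M) hterm
      have hval : (∑ i ∈ Finset.Icc 1 M, if i = j then u else (0 : X)) = u := by
        rw [Finset.sum_ite_eq' (Finset.Icc 1 M) j (fun _ => u)]
        rw [if_pos (Finset.mem_Icc.2 ⟨hj1, hjM⟩)]
      have hw0 : Tendsto (fun n => (T ^ (j * Q n)) w) atTop (𝓝 0) :=
        (key w hwX₀ (fun n => j * Q n) (hbr j hj1 hjM) (hbt j hj1)).1
      have htot := hw0.add hsum
      rw [hval, zero_add] at htot
      rw [show (fun n => (T ^ (j * Q n)) (x n))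
          = fun n => (T ^ (j * Q n)) w
              + ∑ i ∈ Finset.Icc 1 M, (T ^ (j * Q n)) (S^[i * Q n] u) from funext hexp]
      exact htot
    -- find a good n
    have h1 : ∀ᶠ n in atTop, x n ∈ W := hxw.eventually (hW.mem_nhds hwW)
    have h2 : ∀ᶠ n in atTop, ∀ j ∈ Finset.Icc 1 M, (T ^ (j * Q n)) (x n) ∈ V := by
      rw [eventually_all_finset]
      intro j hj
      obtain ⟨hj1, hjM⟩ := Finset.mem_Icc.1 hj
      exact (hTx j hj1 hjM).eventually (hV.mem_nhds huV)
    obtain ⟨n, hn1, hn2⟩ := (h1.and h2).exists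
    exact ⟨x n, hn1, ⟨Q n, (hQm n).1.2,
      fun j hj1 hjM => hn2 j (Finset.mem_Icc.2 ⟨hj1, hjM⟩)⟩⟩
  -- Baire category argument
  obtain ⟨b, hbc, hbe, hbasis⟩ := TopologicalSpace.exists_countable_basis X
  haveI : Countable b := hbc.to_subtype
  have hdense : Dense (⋂ p : b × ℕ,
      {x : X | ∃ q, 1 ≤ q ∧ ∀ j, 1 ≤ j → j ≤ p.2 + 1 → (T ^ (j * q)) x ∈ (p.1 : Set X)}) := by
    refine dense_iInter_of_isOpen
      (fun p => hFopen _ (hbasis.isOpen p.1.2) _)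
      (fun p => hFdense _ (hbasis.isOpen p.1.2) ?_ _)
    rw [Set.nonempty_iff_ne_empty]
    intro h
    exact hbe (h ▸ p.1.2)
  obtain ⟨x, hx⟩ := hdense.nonempty
  refine ⟨x, fun U hU hUne m => ?_⟩
  obtain ⟨y, hy⟩ := hUne
  obtain ⟨V, hVb, hyV, hVU⟩ := hbasis.exists_subset_of_mem_open hy hU
  have hxF := Set.mem_iInter.1 hx ⟨⟨V, hVb⟩, m⟩
  obtain ⟨q, hq1, hq⟩ := hxF
  refine ⟨q, q, hq1, hq1, fun j hj => ?_⟩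
  show (T ^ (q + j * q)) x ∈ U
  have h := hq (j + 1) (by omega) (by omega)
  have he : q + j * q = (j + 1) * q := by ring
  rw [he]
  exact hVU h
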